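/- arXiv:1605.09115 — 3 statements merged into one kernel-verified Lean document; each statement's English description precedes it below -/
import Mathlib

section
/- Let F be a finite set of directed firewalls, and define single firewall-path concatenation on F* so that the concatenation ab of two words a,b is their word concatenation if the valid-path conditions hold, and the special element φ otherwise, with φ·a = a·φ = φ for all a. Then this concatenation is associative on F* ∪ {φ}. -/
/-- A directed firewall: source zone, target zone, underlying physical firewall. -/
structure FW (Z W : Type) where
  src : Z
  tgt : Z
  fw  : W

/-- The sequence of zones `d₁, …, d_{n+1}` visited by a word of directed firewalls. -/
def zoneSeq {Z W : Type} (a : List (FW Z W)) : List Z :=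
  a.map FW.src ++ (a.getLast?.elim [] fun t => [t.tgt])

/-- Validity conditions for concatenating two firewall words:
endpoints connect, no zone of the second word (other than its first) occurs in the
first word, and no physical firewall is traversed twice. -/
def validCat {Z W : Type} (a b : List (FW Z W)) : Prop :=
  (∀ t ∈ a.getLast?, ∀ s ∈ b.head?, t.tgt = s.src) ∧
  (∀ z ∈ (zoneSeq b).tail, z ∉ zoneSeq a) ∧
  (∀ t ∈ a, ∀ s ∈ b, t.fw ≠ s.fw)

open Classical in
/-- Single firewall-path concatenation on `F* ∪ {φ}` (`none` is `φ`). -/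
noncomputable def fcat {Z W : Type} :
    Option (List (FW Z W)) → Option (List (FW Z W)) → Option (List (FW Z W))
  | some x, some y => if validCat x y then some (x ++ y) else none
  | _, _ => none

namespace FWaux
variable {Z W : Type}

lemma zoneSeq_eq (a : List (FW Z W)) (ha : a ≠ []) :
    zoneSeq a = a.map FW.src ++ [(a.getLast ha).tgt] := by
  simp [zoneSeq, List.getLast?_eq_getLast ha]

lemma zoneSeq_append (x y : List (FW Z W)) (hy : y ≠ []) :
    zoneSeq (x ++ y) = x.map FW.src ++ zoneSeq y := by
  unfold zoneSeq
  rw [List.getLast?_append_of_ne_nil _ hy, List.map_append, List.append_assoc]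

lemma validCat_nil_left (b : List (FW Z W)) : validCat [] b := by
  simp [validCat, zoneSeq]

lemma validCat_nil_right (a : List (FW Z W)) : validCat a [] := by
  simp [validCat, zoneSeq]

lemma mem_zoneSeq_iff (a : List (FW Z W)) (ha : a ≠ []) (w : Z) :
    w ∈ zoneSeq a ↔ w ∈ a.map FW.src ∨ w = (a.getLast ha).tgt := by
  rw [zoneSeq_eq a ha]; simp

/-- Characterization of `validCat` for nonempty lists in cons form. -/
lemma validCat_cons (p q : FW Z W) (xs ys : List (FW Z W)) :
    validCat (p::xs) (q::ys) ↔
      ((p::xs).getLast (by simp)).tgt = q.src ∧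
      (∀ w, (w ∈ ys.map FW.src ∨ w = ((q::ys).getLast (by simp)).tgt) →
        w ∉ zoneSeq (p::xs)) ∧
      (∀ t ∈ p::xs, ∀ s ∈ q::ys, t.fw ≠ s.fw) := by
  unfold validCat
  rw [zoneSeq_eq (q::ys) (by simp)]
  simp [List.getLast?_eq_getLast (List.cons_ne_nil p xs), or_comm]

/-- The key combinatorial fact. -/
lemma key (x y z : List (FW Z W)) :
    (validCat x y ∧ validCat (x ++ y) z) ↔ (validCat y z ∧ validCat x (y ++ z)) := by
  rcases x with _ | ⟨p, xs⟩
  · simp [validCat_nil_left]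
  rcases y with _ | ⟨q, ys⟩
  · simp [validCat_nil_left, validCat_nil_right]
  rcases z with _ | ⟨r, zs⟩
  · simp [validCat_nil_left, validCat_nil_right]
  -- abbreviations
  set X := p :: xs with hX
  set Y := q :: ys with hY
  set Zl := r :: zs with hZ
  have hXne : X ≠ [] := by simp [hX]
  have hYne : Y ≠ [] := by simp [hY]
  have hZne : Zl ≠ [] := by simp [hZ]
  have hXY : X ++ Y = p :: (xs ++ Y) := by simp [hX]
  have hYZ : Y ++ Zl = q :: (ys ++ Zl) := by simp [hY]
  have lastXY : ((X ++ Y).getLast (by simp [hX])) = Y.getLast hYne :=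
    List.getLast_append_of_ne_nil _ hYne
  have lastYZ : ((Y ++ Zl).getLast (by simp [hY])) = Zl.getLast hZne :=
    List.getLast_append_of_ne_nil _ hZne
  set lx := X.getLast hXne
  set ly := Y.getLast hYne
  set lz := Zl.getLast hZne
  -- membership rewrites
  have memX : ∀ w, w ∈ zoneSeq X ↔ w ∈ X.map FW.src ∨ w = lx.tgt :=
    fun w => mem_zoneSeq_iff X hXne w
  have memY : ∀ w, w ∈ zoneSeq Y ↔ w ∈ Y.map FW.src ∨ w = ly.tgt :=
    fun w => mem_zoneSeq_iff Y hYne w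
  have memZ : ∀ w, w ∈ zoneSeq Zl ↔ w ∈ Zl.map FW.src ∨ w = lz.tgt :=
    fun w => mem_zoneSeq_iff Zl hZne w
  have memXY : ∀ w, w ∈ zoneSeq (X ++ Y) ↔ w ∈ X.map FW.src ∨ w ∈ zoneSeq Y := by
    intro w; rw [zoneSeq_append X Y hYne]; simp
  -- validCat rewrites in cons form
  have vXY : validCat X Y ↔
      lx.tgt = q.src ∧
      (∀ w, (w ∈ ys.map FW.src ∨ w = ly.tgt) → w ∉ zoneSeq X) ∧
      (∀ t ∈ X, ∀ s ∈ Y, t.fw ≠ s.fw) := validCat_cons p q xs ys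
  have vYZ : validCat Y Zl ↔
      ly.tgt = r.src ∧
      (∀ w, (w ∈ zs.map FW.src ∨ w = lz.tgt) → w ∉ zoneSeq Y) ∧
      (∀ t ∈ Y, ∀ s ∈ Zl, t.fw ≠ s.fw) := validCat_cons q r ys zs
  have vXYZ : validCat (X ++ Y) Zl ↔
      ly.tgt = r.src ∧
      (∀ w, (w ∈ zs.map FW.src ∨ w = lz.tgt) → w ∉ zoneSeq (X ++ Y)) ∧
      (∀ t ∈ X ++ Y, ∀ s ∈ Zl, t.fw ≠ s.fw) := by
    have lastXY' : ((p :: (xs ++ Y)).getLast (by simp)) = ly := lastXY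
    rw [hXY]
    rw [validCat_cons p r (xs ++ Y) zs]
    rw [lastXY', ← hXY]
  have vXYZ' : validCat X (Y ++ Zl) ↔
      lx.tgt = q.src ∧
      (∀ w, (w ∈ (ys ++ Zl).map FW.src ∨ w = lz.tgt) → w ∉ zoneSeq X) ∧
      (∀ t ∈ X, ∀ s ∈ Y ++ Zl, t.fw ≠ s.fw) := by
    have lastYZ' : ((q :: (ys ++ Zl)).getLast (by simp)) = lz := lastYZ
    rw [hYZ]
    rw [validCat_cons p q xs (ys ++ Zl)]
    rw [lastYZ', ← hYZ]
  -- basic membership facts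
  have hqY : q.src ∈ Y.map FW.src := by simp [hY]
  have hrZ : r.src ∈ Zl.map FW.src := by simp [hZ]
  have hlyY : ly.tgt ∈ zoneSeq Y := (memY _).2 (Or.inr rfl)
  have hlzZ : lz.tgt ∈ zoneSeq Zl := (memZ _).2 (Or.inr rfl)
  have hqZs : q.src ∈ zoneSeq Y := (memY _).2 (Or.inl hqY)
  have hrZs : r.src ∈ zoneSeq Zl := (memZ _).2 (Or.inl hrZ)
  have mapYsplit : ∀ w : Z, w ∈ Y.map FW.src ↔ w = q.src ∨ w ∈ ys.map FW.src := by
    intro w; simp [hY, eq_comm]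
  have mapZsplit : ∀ w : Z, w ∈ Zl.map FW.src ↔ w = r.src ∨ w ∈ zs.map FW.src := by
    intro w; simp [hZ, eq_comm]
  rw [vXY, vYZ, vXYZ, vXYZ']
  constructor
  · rintro ⟨⟨h1, h2, h3⟩, ⟨g1, g2, g3⟩⟩
    refine ⟨⟨g1, ?_, ?_⟩, h1, ?_, ?_⟩
    · -- cond2 for (Y, Z)
      intro w hw
      intro hmem
      exact g2 w hw ((memXY w).2 (Or.inr hmem))
    · -- cond3 for (Y, Z)
      intro t ht s hs
      exact g3 t (List.mem_append_right X ht) s hs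
    · -- cond2 for (X, Y++Z)
      intro w hw
      rcases hw with hw | hw
      · rcases List.mem_map.1 hw with ⟨s, hs, rfl⟩
        rcases List.mem_append.1 hs with hs | hs
        · -- s ∈ ys
          exact h2 _ (Or.inl (List.mem_map_of_mem (f := FW.src) hs))
        · -- s ∈ Z : s.src ∈ zoneSeq Z
          rcases (mapZsplit s.src).1 (List.mem_map_of_mem (f := FW.src) hs) with heq | hzs
          · -- s.src = r.src = ly.tgt
            rw [heq, ← g1]
            exact h2 _ (Or.inr rfl)
          · intro hmemX
            have := g2 _ (Or.inl hzs)
            apply this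
            rw [memXY]
            rcases (memX _).1 hmemX with h' | h'
            · exact Or.inl h'
            · exact Or.inr (by rw [h', h1]; exact hqZs)
      · -- w = lz.tgt
        subst hw
        intro hmemX
        have := g2 _ (Or.inr rfl)
        apply this
        rw [memXY]
        rcases (memX _).1 hmemX with h' | h'
        · exact Or.inl h'
        · exact Or.inr (by rw [h', h1]; exact hqZs)
    · -- cond3 for (X, Y++Z)
      intro t ht s hs
      rcases List.mem_append.1 hs with hs | hs
      · exact h3 t ht s hs
      · exact g3 t (List.mem_append_left Y ht) s hs
  · rintro ⟨⟨h1, h2, h3⟩, ⟨g1, g2, g3⟩⟩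
    refine ⟨⟨g1, ?_, ?_⟩, h1, ?_, ?_⟩
    · -- cond2 for (X, Y)
      intro w hw
      rcases hw with hw | hw
      · exact g2 w (Or.inl (by rw [List.map_append]; exact List.mem_append_left _ hw))
      · -- w = ly.tgt = r.src ∈ zoneSeq Z
        subst hw
        apply g2
        left
        rw [List.map_append]
        refine List.mem_append_right _ ?_
        rw [h1]; exact hrZ
    · -- cond3 for (X, Y)
      intro t ht s hs
      exact g3 t ht s (List.mem_append_left Zl hs)
    · -- cond2 for (X++Y, Z)
      intro w hw
      intro hmem
      rcases (memXY w).1 hmem with hm | hm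
      · -- w ∈ map src X ⊆ zoneSeq X, contradict g2
        have hwZ : w ∈ (ys ++ Zl).map FW.src ∨ w = lz.tgt := by
          rcases hw with hw | hw
          · left; rw [List.map_append]
            refine List.mem_append_right _ ?_
            rw [mapZsplit]; exact Or.inr hw
          · exact Or.inr hw
        exact g2 w hwZ ((memX w).2 (Or.inl hm))
      · exact h2 w hw hm
    · -- cond3 for (X++Y, Z)
      intro t ht s hs
      rcases List.mem_append.1 ht with ht | ht
      · exact g3 t ht s (List.mem_append_right Y hs)
      · exact h3 t ht s hs

end FWaux

lemma fcat_none_left {Z W : Type} (a : Option (List (FW Z W))) :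
    fcat none a = none := by cases a <;> rfl

lemma fcat_none_right {Z W : Type} (a : Option (List (FW Z W))) :
    fcat a none = none := by cases a <;> rfl

/-- single firewall-path concatenation (with absorbing element `φ`)
is associative on `F* ∪ {φ}`, for a finite alphabet of directed firewalls. -/
theorem fcat_assoc {Z W : Type} [Finite Z] [Finite W]
    (a b c : Option (List (FW Z W))) :
    fcat (fcat a b) c = fcat a (fcat b c) := by
  rcases a with _ | x
  · simp [fcat_none_left]
  rcases b with _ | y
  · simp [fcat_none_left, fcat_none_right]
  rcases c with _ | z
  · simp [fcat_none_left, fcat_none_right]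
  have hkey := FWaux.key x y z
  by_cases hxy : validCat x y
  · by_cases hyz : validCat y z
    · by_cases hxyz : validCat (x ++ y) z
      · have hxyz' : validCat x (y ++ z) := (hkey.1 ⟨hxy, hxyz⟩).2
        simp [fcat, hxy, hyz, hxyz, hxyz', List.append_assoc]
      · have hxyz' : ¬ validCat x (y ++ z) := fun h => hxyz (hkey.2 ⟨hyz, h⟩).2
        simp [fcat, hxy, hyz, hxyz, hxyz']
    · have hxyz : ¬ validCat (x ++ y) z := fun h => hyz (hkey.1 ⟨hxy, h⟩).1
      simp [fcat, hxy, hyz, hxyz]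
  · by_cases hyz : validCat y z
    · have hxyz' : ¬ validCat x (y ++ z) := fun h => hxy (hkey.2 ⟨hyz, h⟩).1
      simp [fcat, hxy, hyz, hxyz']
    · simp [fcat, hxy, hyz]
end

section
/- Let S be the power set of F* (sets of firewall paths), with addition given by set union and multiplication given by elementwise path concatenation a·b = {xy : x ∈ a, y ∈ b} \ {φ}. Then (S, ∪, ·, ∅, {ε}) is an idempotent semiring: union is associative, commutative, idempotent with identity ∅; multiplication is associative with identity {ε}; multiplication distributes over union on both sides; and ∅ is a two-sided multiplicative annihilator. -/
/-- Elementwise path concatenation of sets of firewall paths: all valid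
concatenations `xy` with `x ∈ a`, `y ∈ b` (invalid ones, i.e. `φ`, discarded). -/
def smul {Z W : Type} (a b : Set (List (FW Z W))) : Set (List (FW Z W)) :=
  {w | ∃ x ∈ a, ∃ y ∈ b, fcat (some x) (some y) = some w}

namespace PFaux
variable {Z W : Type}

lemma zoneSeq_nil : zoneSeq ([] : List (FW Z W)) = [] := by simp [zoneSeq]

lemma validCat_nil_left (b : List (FW Z W)) : validCat [] b :=
  ⟨by simp, by simp [zoneSeq_nil], by simp⟩

lemma validCat_nil_right (a : List (FW Z W)) : validCat a [] :=
  ⟨by simp, by simp [zoneSeq], by simp⟩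

lemma zoneSeq_eq (a : List (FW Z W)) (ha : a ≠ []) :
    zoneSeq a = a.map FW.src ++ [(a.getLast ha).tgt] := by
  simp [zoneSeq, List.getLast?_eq_getLast ha]

lemma zoneSeq_append (a b : List (FW Z W)) (hb : b ≠ []) :
    zoneSeq (a ++ b) = a.map FW.src ++ zoneSeq b := by
  simp [zoneSeq, List.getLast?_append_of_ne_nil _ hb, List.append_assoc]

lemma cat_assoc_iff (x y z : List (FW Z W)) :
    (validCat x y ∧ validCat (x ++ y) z) ↔ (validCat y z ∧ validCat x (y ++ z)) := by
  rcases eq_or_ne y [] with rfl | hy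
  · simp [validCat_nil_left, validCat_nil_right]
  rcases eq_or_ne z [] with rfl | hz
  · simp [validCat_nil_left, validCat_nil_right]
  rcases eq_or_ne x [] with rfl | hx
  · simp [validCat_nil_left, validCat_nil_right]
  obtain ⟨b, ys, rfl⟩ := List.exists_cons_of_ne_nil hy
  obtain ⟨c, zs, rfl⟩ := List.exists_cons_of_ne_nil hz
  set Ex := (x.getLast hx).tgt with hEx
  set Ey := ((b :: ys).getLast (by simp)).tgt with hEy
  set Ez := ((c :: zs).getLast (by simp)).tgt with hEz
  have gy : (b :: ys : List (FW Z W)).getLast? = some ((b :: ys).getLast (by simp)) :=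
    List.getLast?_eq_getLast _
  have gz : (c :: zs : List (FW Z W)).getLast? = some ((c :: zs).getLast (by simp)) :=
    List.getLast?_eq_getLast _
  have g1 : (x ++ b :: ys).getLast? = some ((b :: ys).getLast (by simp)) := by
    rw [List.getLast?_append_of_ne_nil _ (by simp), gy]
  have g2 : ((b :: ys) ++ c :: zs).getLast? = some ((c :: zs).getLast (by simp)) := by
    rw [List.getLast?_append_of_ne_nil _ (by simp), gz]
  have hh : ((b :: ys) ++ c :: zs).head? = some b := by
    rw [List.head?_append_of_ne_nil _ (by simp), List.head?_cons]
  have zx : zoneSeq x = x.map FW.src ++ [Ex] := zoneSeq_eq x hx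
  have zy : zoneSeq (b :: ys) = b.src :: (ys.map FW.src ++ [Ey]) := by
    rw [zoneSeq_eq _ (by simp)]; simp [hEy]
  have zz : zoneSeq (c :: zs) = c.src :: (zs.map FW.src ++ [Ez]) := by
    rw [zoneSeq_eq _ (by simp)]; simp [hEz]
  have zxy : zoneSeq (x ++ b :: ys) = x.map FW.src ++ zoneSeq (b :: ys) :=
    zoneSeq_append _ _ (by simp)
  have zyz : zoneSeq ((b :: ys) ++ c :: zs) = (b :: ys).map FW.src ++ zoneSeq (c :: zs) :=
    zoneSeq_append _ _ (by simp)
  unfold validCat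
  simp only [zxy, zyz, zx, zy, zz, g1, g2, gy, gz, hh,
    List.getLast?_eq_getLast hx, List.head?_cons, List.map_cons]
  simp only [Option.mem_def, Option.some.injEq, forall_eq', List.cons_append,
    List.tail_cons, List.mem_append, List.mem_cons, List.mem_singleton,
    List.not_mem_nil, not_or]
  constructor
  · rintro ⟨⟨P1, P2, P3⟩, Q1, Q2, Q3⟩
    refine ⟨⟨Q1, fun u hu => ?_, fun t ht s hs => Q3 t (Or.inr ht) s hs⟩,
      P1, fun u hu => ?_, fun t ht s hs => ?_⟩
    · have := Q2 u hu; tauto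
    · rcases hu with hu | hu | hu | hu | hu
      · exact P2 u (Or.inl hu)
      · exact P2 u (Or.inr (Or.inl (hu.trans Q1.symm)))
      · have h2 := Q2 u (Or.inl hu)
        exact ⟨h2.1, fun he => h2.2.1 (he.trans P1), fun f => f⟩
      · have h2 := Q2 u (Or.inr (Or.inl hu))
        exact ⟨h2.1, fun he => h2.2.1 (he.trans P1), fun f => f⟩
      · exact absurd hu (fun f => f)
    · rcases hs with hs | hs | hs | hs
      · exact P3 t ht s (Or.inl hs)
      · exact P3 t ht s (Or.inr hs)
      · exact Q3 t (Or.inl ht) s (Or.inl hs)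
      · exact Q3 t (Or.inl ht) s (Or.inr hs)
  · rintro ⟨⟨C1, C2, C3⟩, D1, D2, D3⟩
    refine ⟨⟨D1, fun u hu => ?_, fun t ht s hs => D3 t ht s (by tauto)⟩,
      C1, fun u hu => ?_, fun t ht s hs => ?_⟩
    · rcases hu with hu | hu | hu
      · exact D2 u (Or.inl hu)
      · exact D2 u (Or.inr (Or.inl (hu.trans C1)))
      · exact absurd hu (fun f => f)
    · have h1 := D2 u (by tauto)
      have h2 := C2 u hu
      exact ⟨h1.1, h2.1, h2.2.1, h2.2.2.1, fun f => f⟩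
    · rcases ht with ht | ht | ht
      · exact D3 t ht s (by tauto)
      · exact C3 t (Or.inl ht) s hs
      · exact C3 t (Or.inr ht) s hs

lemma fcat_none_right (p : Option (List (FW Z W))) : fcat p none = none := by
  cases p <;> rfl

lemma fcat_none_left (p : Option (List (FW Z W))) : fcat none p = none := rfl

open Classical in
lemma fcat_some (x y : List (FW Z W)) :
    fcat (some x) (some y) = if validCat x y then some (x ++ y) else none := rfl

lemma fcat_assoc (p q r : Option (List (FW Z W))) :
    fcat (fcat p q) r = fcat p (fcat q r) := by
  classical
  rcases p with _ | x
  · simp [fcat_none_left]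
  rcases q with _ | y
  · simp [fcat_none_left, fcat_none_right]
  rcases r with _ | z
  · simp [fcat_none_right]
  rw [fcat_some x y, fcat_some y z]
  by_cases h1 : validCat x y <;> by_cases h2 : validCat y z
  · rw [if_pos h1, if_pos h2, fcat_some, fcat_some]
    have hiff : validCat (x ++ y) z ↔ validCat x (y ++ z) :=
      ⟨fun h => ((cat_assoc_iff x y z).mp ⟨h1, h⟩).2,
       fun h => ((cat_assoc_iff x y z).mpr ⟨h2, h⟩).2⟩
    split_ifs with h3 h4 h4
    · rw [List.append_assoc]
    · exact absurd (hiff.mp h3) h4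
    · exact absurd (hiff.mpr h4) h3
    · rfl
  · rw [if_pos h1, if_neg h2, fcat_some, fcat_none_right, if_neg]
    intro h; exact h2 ((cat_assoc_iff x y z).mp ⟨h1, h⟩).1
  · rw [if_neg h1, if_pos h2, fcat_none_left, fcat_some, if_neg]
    intro h; exact h1 ((cat_assoc_iff x y z).mpr ⟨h2, h⟩).1
  · rw [if_neg h1, if_neg h2, fcat_none_left, fcat_none_right]

end PFaux

/-- `(S, ∪, ·, ∅, {ε})`, where `S` is the power set of `F*` with union as
addition and elementwise valid-concatenation as multiplication, is an idempotent
semiring. -/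
theorem pathSets_idempotent_semiring {Z W : Type} [Finite Z] [Finite W] :
    (∀ a b c : Set (List (FW Z W)), (a ∪ b) ∪ c = a ∪ (b ∪ c)) ∧
    (∀ a b : Set (List (FW Z W)), a ∪ b = b ∪ a) ∧
    (∀ a : Set (List (FW Z W)), a ∪ a = a) ∧
    (∀ a : Set (List (FW Z W)), ∅ ∪ a = a ∧ a ∪ ∅ = a) ∧
    (∀ a b c : Set (List (FW Z W)), smul (smul a b) c = smul a (smul b c)) ∧
    (∀ a : Set (List (FW Z W)), smul {([] : List (FW Z W))} a = a ∧
      smul a {([] : List (FW Z W))} = a) ∧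
    (∀ a b c : Set (List (FW Z W)), smul a (b ∪ c) = smul a b ∪ smul a c) ∧
    (∀ a b c : Set (List (FW Z W)), smul (a ∪ b) c = smul a c ∪ smul b c) ∧
    (∀ a : Set (List (FW Z W)), smul ∅ a = ∅ ∧ smul a ∅ = ∅) := by
  refine ⟨fun a b c => Set.union_assoc a b c, fun a b => Set.union_comm a b,
    fun a => Set.union_self a, fun a => ⟨Set.empty_union a, Set.union_empty a⟩,
    ?_, ?_, ?_, ?_, ?_⟩
  · intro a b c
    ext w
    simp only [smul, Set.mem_setOf_eq]
    constructor
    · rintro ⟨v, ⟨x, hx, y, hy, hxy⟩, z, hz, hvz⟩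
      have key : fcat (some x) (fcat (some y) (some z)) = some w := by
        rw [← PFaux.fcat_assoc, hxy, hvz]
      cases hq : fcat (some y) (some z) with
      | none => rw [hq, PFaux.fcat_none_right] at key; exact absurd key (by simp)
      | some u =>
        rw [hq] at key
        exact ⟨x, hx, u, ⟨y, hy, z, hz, hq⟩, key⟩
    · rintro ⟨x, hx, v, ⟨y, hy, z, hz, hyz⟩, hxv⟩
      have key : fcat (fcat (some x) (some y)) (some z) = some w := by
        rw [PFaux.fcat_assoc, hyz, hxv]
      cases hq : fcat (some x) (some y) with
      | none => rw [hq, PFaux.fcat_none_left] at key; exact absurd key (by simp)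
      | some u =>
        rw [hq] at key
        exact ⟨u, ⟨x, hx, y, hy, hq⟩, z, hz, key⟩
  · intro a
    constructor <;> ext w <;>
      simp [smul, PFaux.fcat_some, PFaux.validCat_nil_left, PFaux.validCat_nil_right]
  · intro a b c
    ext w
    simp only [smul, Set.mem_union, Set.mem_setOf_eq]
    constructor
    · rintro ⟨x, hx, y, hy | hy, h⟩
      · exact Or.inl ⟨x, hx, y, hy, h⟩
      · exact Or.inr ⟨x, hx, y, hy, h⟩
    · rintro (⟨x, hx, y, hy, h⟩ | ⟨x, hx, y, hy, h⟩)
      exacts [⟨x, hx, y, Or.inl hy, h⟩, ⟨x, hx, y, Or.inr hy, h⟩]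
  · intro a b c
    ext w
    simp only [smul, Set.mem_union, Set.mem_setOf_eq]
    constructor
    · rintro ⟨x, hx | hx, y, hy, h⟩
      · exact Or.inl ⟨x, hx, y, hy, h⟩
      · exact Or.inr ⟨x, hx, y, hy, h⟩
    · rintro (⟨x, hx, y, hy, h⟩ | ⟨x, hx, y, hy, h⟩)
      exacts [⟨x, Or.inl hx, y, hy, h⟩, ⟨x, Or.inr hx, y, hy, h⟩]
  · intro a
    constructor <;> ext w <;> simp [smul]
end

section
/- In a zone graph where some zone z is non-transitive (T(z,z) = ∅), the fixed point A* computed by the right iteration contains no path with z as an intermediate zone: for all i ≠ z, j ≠ z, every path in A*(i,j) avoids z as an interior vertex; consequently, entrywise, A*_T ⊆ A*_I where A*_T is computed with the transitivity matrix T and A*_I with T replaced by the identity I. -/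
/-- `n × n` matrices over the firewall-path semiring `S`. -/
abbrev PMat (n : ℕ) (Z W : Type) := Fin n → Fin n → Set (List (FW Z W))

/-- Entrywise matrix addition (union). -/
def madd {n : ℕ} {Z W : Type} (A B : PMat n Z W) : PMat n Z W :=
  fun i j => A i j ∪ B i j

/-- Matrix multiplication over `S`: `(AB)(i,k) = ⋃ j, A(i,j) · B(j,k)`. -/
def mmul {n : ℕ} {Z W : Type} (A B : PMat n Z W) : PMat n Z W :=
  fun i k => ⋃ j, smul (A i j) (B j k)

/-- The multiplicative identity matrix `I`: `{ε}` on the diagonal, `∅` elsewhere. -/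
def mI (n : ℕ) (Z W : Type) : PMat n Z W :=
  fun i j => if i = j then {[]} else ∅

/-- The all-`∅` matrix. -/
def mZero (n : ℕ) (Z W : Type) : PMat n Z W := fun _ _ => ∅

/-- The right iteration `A⁽⁰⁾ = I`, `A⁽ᵏ⁺¹⁾ = (A⁽ᵏ⁾ T ∪ I) A`. -/
def iterR {n : ℕ} {Z W : Type} (A T : PMat n Z W) : ℕ → PMat n Z W
  | 0 => mI n Z W
  | k + 1 => mmul (madd (mmul (iterR A T k) T) (mI n Z W)) A

/-- Matrix powers `Aᵐ`. -/
def mpow {n : ℕ} {Z W : Type} (A : PMat n Z W) : ℕ → PMat n Z W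
  | 0 => mI n Z W
  | m + 1 => mmul (mpow A m) A

/-- `w` is a firewall path from zone `i` to zone `j`: its hops chain up, starting at
`i` and ending at `j` (the empty path goes from `i` to `i`). -/
def isPath {n : ℕ} {W : Type} (i j : Fin n) (w : List (FW (Fin n) W)) : Prop :=
  w.map FW.src ++ [j] = i :: w.map FW.tgt

/-- A valid firewall path: elementary (no repeated zone) and no physical firewall
traversed twice. -/
def validW {n : ℕ} {W : Type} (w : List (FW (Fin n) W)) : Prop :=
  (zoneSeq w).Nodup ∧ (w.map FW.fw).Nodup

lemma fcat_some_iff {Z W : Type} (x y w : List (FW Z W)) :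
    fcat (some x) (some y) = some w ↔ validCat x y ∧ x ++ y = w := by
  unfold fcat
  by_cases h : validCat x y <;> simp [h]

lemma smul_mono {Z W : Type} {a a' b b' : Set (List (FW Z W))}
    (ha : a ⊆ a') (hb : b ⊆ b') : smul a b ⊆ smul a' b' := by
  rintro w ⟨x, hx, y, hy, h⟩
  exact ⟨x, ha hx, y, hb hy, h⟩

lemma iterR_mono {n : ℕ} {Z W : Type} (A T T' : PMat n Z W)
    (hT : ∀ i j, T i j ⊆ T' i j) :
    ∀ k i j, iterR A T k i j ⊆ iterR A T' k i j := by
  intro k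
  induction k with
  | zero => intro i j; exact subset_rfl
  | succ k ih =>
    intro i j
    simp only [iterR, mmul]
    refine Set.iUnion_mono fun m => smul_mono ?_ subset_rfl
    intro x hx
    rcases hx with hx | hx
    · left
      obtain ⟨p, hp⟩ := Set.mem_iUnion.mp hx
      exact Set.mem_iUnion.mpr ⟨p, smul_mono (ih i p) (hT p m) hp⟩
    · right; exact hx

lemma T_diag_mem {n : ℕ} {Z W : Type} (T : PMat n Z W) {p m : Fin n}
    {x : List (FW Z W)} (h : x ∈ T p m)
    (z : Fin n)
    (hT_off : ∀ i j : Fin n, i ≠ j → T i j = ∅)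
    (hTz : T z z = ∅)
    (hT_other : ∀ i : Fin n, i ≠ z → T i i = {([] : List (FW Z W))}) :
    p = m ∧ m ≠ z ∧ x = [] := by
  by_cases hpm : p = m
  · subst hpm
    by_cases hpz : p = z
    · subst hpz; rw [hTz] at h; exact absurd h (Set.notMem_empty _)
    · rw [hT_other p hpz] at h
      exact ⟨rfl, hpz, h⟩
  · rw [hT_off p m hpm] at h; exact absurd h (Set.notMem_empty _)

lemma avoid_aux {n : ℕ} {W : Type}
    (A T : PMat n (Fin n) W) (z : Fin n)
    (hA : ∀ (i j : Fin n), ∀ w ∈ A i j, ∃ t : FW (Fin n) W,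
      w = [t] ∧ t.src = i ∧ t.tgt = j)
    (hT_off : ∀ i j : Fin n, i ≠ j → T i j = ∅)
    (hTz : T z z = ∅)
    (hT_other : ∀ i : Fin n, i ≠ z → T i i = {([] : List (FW (Fin n) W))}) :
    ∀ k, ∀ i j : Fin n, i ≠ z →
      ∀ w ∈ iterR A T k i j, z ∉ (w.map FW.src).tail := by
  intro k
  induction k with
  | zero =>
    intro i j hi w hw
    simp only [iterR, mI] at hw
    split_ifs at hw with h
    · simp only [Set.mem_singleton_iff] at hw; subst hw; simp
    · exact absurd hw (Set.notMem_empty _)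
  | succ k ih =>
    intro i j hi w hw
    simp only [iterR, mmul] at hw
    obtain ⟨m, hm⟩ := Set.mem_iUnion.mp hw
    obtain ⟨x, hx, y, hy, hcat⟩ := hm
    obtain ⟨t, rfl, hts, htt⟩ := hA m j y hy
    rw [fcat_some_iff] at hcat
    obtain ⟨-, rfl⟩ := hcat
    rcases hx with hx | hx
    · -- x ∈ (iterR k) * T at (i, m)
      obtain ⟨p, hp⟩ := Set.mem_iUnion.mp hx
      obtain ⟨x', hx', e, he, hc⟩ := hp
      obtain ⟨rfl, hmz, rfl⟩ := T_diag_mem T he z hT_off hTz hT_other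
      rw [fcat_some_iff] at hc
      obtain ⟨-, rfl⟩ := hc
      have hzx := ih i p hi x' hx'
      rcases x' with _ | ⟨a, x''⟩
      · simp
      · simp only [List.map_cons, List.tail_cons] at hzx
        intro h
        simp only [List.cons_append, List.nil_append, List.append_nil,
          List.map_cons, List.map_append, List.tail_cons, List.mem_append,
          List.mem_cons, List.not_mem_nil, or_false] at h
        rcases h with h | h
        · exact hzx h
        · rcases h with h | h
          · exact hmz (hts ▸ h).symm
          · exact absurd h List.not_mem_nil
    · -- x ∈ I
      simp only [mI] at hx
      split_ifs at hx with h
      · simp only [Set.mem_singleton_iff] at hx; subst hx; simp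
      · exact absurd hx (Set.notMem_empty _)


/-- if zone `z` is non-transitive (`T(z,z) = ∅`, all other diagonal
entries `{ε}`, off-diagonal `∅`) and `A` is the generalized adjacency matrix of
one-hop paths, then the fixed point `A* = A⁽ⁿ⁻¹⁾` computed with `T` contains no path
having `z` as an intermediate zone, and entrywise `A*_T ⊆ A*_I` where `A*_I` is
computed with `T` replaced by the identity. -/
theorem nontransitive_zone_avoided {n : ℕ} {W : Type}
    (A T : PMat n (Fin n) W) (z : Fin n)
    (hA : ∀ (i j : Fin n), ∀ w ∈ A i j, ∃ t : FW (Fin n) W,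
      w = [t] ∧ t.src = i ∧ t.tgt = j)
    (hT_off : ∀ i j : Fin n, i ≠ j → T i j = ∅)
    (hTz : T z z = ∅)
    (hT_other : ∀ i : Fin n, i ≠ z → T i i = {([] : List (FW (Fin n) W))}) :
    (∀ i j : Fin n, i ≠ z → j ≠ z →
      ∀ w ∈ iterR A T (n - 1) i j, z ∉ (w.map FW.src).tail) ∧
    (∀ i j : Fin n,
      iterR A T (n - 1) i j ⊆ iterR A (mI n (Fin n) W) (n - 1) i j) := by
  constructor
  · intro i j hi _ w hw
    exact avoid_aux A T z hA hT_off hTz hT_other (n - 1) i j hi w hw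
  · intro i j
    refine iterR_mono A T (mI n (Fin n) W) ?_ (n - 1) i j
    intro p q x hx
    obtain ⟨rfl, hqz, rfl⟩ := T_diag_mem T hx z hT_off hTz hT_other
    simp [mI]
end
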